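/- Let Θ = ℝ^{m×J} × ℝ^{J×d} × ℝ^m × ℝ^J with the Euclidean (Frobenius) inner product, parametrizing affine functions f(x) = U(Vx + v) + u via θ = (U, V, u, v). Let Φ : ℝ^{m×d} × ℝ^m → ℝ be differentiable and define the loss L(U, V, u, v) = Φ(UV, Uv + u), so that L depends on θ only through the realized affine map. If θ = (U, V, u, v) : ℝ → Θ is a differentiable solution of the gradient flow θ'(t) = −∇L(θ(t)), then the matrix-valued quantity U(t)ᵀU(t) − V(t)V(t)ᵀ − v(t)v(t)ᵀ ∈ ℝ^{J×J} is constant in t. -/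

import Mathlib

noncomputable section

/-- Index type for the parameter space `Θ = ℝ^{m×J} × ℝ^{J×d} × ℝ^m × ℝ^J`. -/
abbrev LinParamIx (m J d : ℕ) : Type :=
  (Fin m × Fin J) ⊕ ((Fin J × Fin d) ⊕ (Fin m ⊕ Fin J))

/-- The parameter space with the Euclidean (Frobenius) inner product. -/
abbrev LinParams (m J d : ℕ) : Type := EuclideanSpace ℝ (LinParamIx m J d)

def Umat {m J d : ℕ} (θ : LinParams m J d) : Fin m → Fin J → ℝ :=
  fun i j => θ (Sum.inl (i, j))

def Vmat {m J d : ℕ} (θ : LinParams m J d) : Fin J → Fin d → ℝ :=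
  fun j k => θ (Sum.inr (Sum.inl (j, k)))

def uvec {m J d : ℕ} (θ : LinParams m J d) : Fin m → ℝ :=
  fun i => θ (Sum.inr (Sum.inr (Sum.inl i)))

def vvec {m J d : ℕ} (θ : LinParams m J d) : Fin J → ℝ :=
  fun j => θ (Sum.inr (Sum.inr (Sum.inr j)))

namespace ConservedAux

variable {m J d : ℕ}

/-- Coordinate projection on the parameter space, as a continuous linear map. -/
def coordL (a : LinParamIx m J d) : LinParams m J d →L[ℝ] ℝ :=
  (ContinuousLinearMap.proj (R := ℝ) (φ := fun _ : LinParamIx m J d => ℝ) a).comp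
    (PiLp.continuousLinearEquiv 2 ℝ (fun _ : LinParamIx m J d => ℝ)).toContinuousLinearMap

@[simp] lemma coordL_apply (a : LinParamIx m J d) (x : LinParams m J d) :
    coordL a x = x a := rfl

/-- The parametrization map `θ ↦ (UV, Uv + u)`. -/
def Pmap (θ : LinParams m J d) : (Fin m → Fin d → ℝ) × (Fin m → ℝ) :=
  (fun i k => ∑ j, θ (Sum.inl (i, j)) * θ (Sum.inr (Sum.inl (j, k))),
   fun i => (∑ j, θ (Sum.inl (i, j)) * θ (Sum.inr (Sum.inr (Sum.inr j))))
      + θ (Sum.inr (Sum.inr (Sum.inl i))))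

/-- The (directional) derivative of `Pmap` at `x` in direction `h`. -/
def DP (x h : LinParams m J d) : (Fin m → Fin d → ℝ) × (Fin m → ℝ) :=
  (fun i k => ∑ j, (h (Sum.inl (i, j)) * x (Sum.inr (Sum.inl (j, k)))
      + x (Sum.inl (i, j)) * h (Sum.inr (Sum.inl (j, k)))),
   fun i => (∑ j, (h (Sum.inl (i, j)) * x (Sum.inr (Sum.inr (Sum.inr j)))
      + x (Sum.inl (i, j)) * h (Sum.inr (Sum.inr (Sum.inr j)))))
      + h (Sum.inr (Sum.inr (Sum.inl i))))

lemma coord_line (x h : LinParams m J d) (a : LinParamIx m J d) :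
    HasDerivAt (fun s : ℝ => (x + s • h) a) (h a) 0 := by
  have : (fun s : ℝ => (x + s • h) a) = fun s : ℝ => x a + s * h a := by
    funext s; simp [PiLp.add_apply, PiLp.smul_apply, smul_eq_mul]
  rw [this]
  simpa using ((hasDerivAt_id (0:ℝ)).mul_const (h a)).const_add (x a)

lemma hasDerivAt_P_line (x h : LinParams m J d) :
    HasDerivAt (fun s : ℝ => Pmap (x + s • h)) (DP x h) 0 := by
  apply HasDerivAt.prodMk
  · rw [hasDerivAt_pi]
    intro i
    rw [hasDerivAt_pi]
    intro k
    apply HasDerivAt.fun_sum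
    intro j _
    have h1 := coord_line x h (Sum.inl (i, j))
    have h2 := coord_line x h (Sum.inr (Sum.inl (j, k)))
    simpa using h1.fun_mul h2
  · rw [hasDerivAt_pi]
    intro i
    apply HasDerivAt.add
    · apply HasDerivAt.fun_sum
      intro j _
      simpa using (coord_line x h (Sum.inl (i, j))).fun_mul
        (coord_line x h (Sum.inr (Sum.inr (Sum.inr j))))
    · exact coord_line x h (Sum.inr (Sum.inr (Sum.inl i)))

lemma differentiable_Pmap : Differentiable ℝ (Pmap (m := m) (J := J) (d := d)) := by
  have hc : ∀ a : LinParamIx m J d, Differentiable ℝ (fun θ : LinParams m J d => θ a) := by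
    intro a
    exact (coordL a).differentiable
  apply Differentiable.prodMk
  · apply differentiable_pi.2; intro i
    apply differentiable_pi.2; intro k
    exact Differentiable.fun_sum fun j _ => ((hc _).mul (hc _))
  · apply differentiable_pi.2; intro i
    apply Differentiable.add
    · exact Differentiable.fun_sum fun j _ => ((hc _).mul (hc _))
    · exact hc _

lemma grad_eq (Φ : ((Fin m → Fin d → ℝ) × (Fin m → ℝ)) → ℝ) (hΦ : Differentiable ℝ Φ)
    (Lo : LinParams m J d → ℝ) (hLo' : ∀ θ, Lo θ = Φ (Pmap θ))
    (x : LinParams m J d) (a : LinParamIx m J d) :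
    gradient Lo x a = fderiv ℝ Φ (Pmap x) (DP x (EuclideanSpace.single a 1)) := by
  set e : LinParams m J d := EuclideanSpace.single a 1 with he
  have hLd : Differentiable ℝ Lo := by
    have hfe : Lo = Φ ∘ Pmap := funext hLo'
    rw [hfe]; exact hΦ.comp differentiable_Pmap
  have hcurve : HasDerivAt (fun s : ℝ => x + s • e) e 0 := by
    simpa using ((hasDerivAt_id (0:ℝ)).smul_const e).const_add x
  have h1 : HasDerivAt (fun s : ℝ => Lo (x + s • e)) (fderiv ℝ Lo x e) 0 := by
    have hfd : HasFDerivAt Lo (fderiv ℝ Lo x) (x + (0:ℝ) • e) := by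
      simpa using (hLd x).hasFDerivAt
    exact hfd.comp_hasDerivAt 0 hcurve
  have h2 : HasDerivAt (fun s : ℝ => Lo (x + s • e)) (fderiv ℝ Φ (Pmap x) (DP x e)) 0 := by
    have hfd : HasFDerivAt Φ (fderiv ℝ Φ (Pmap x)) (Pmap (x + (0:ℝ) • e)) := by
      simpa using (hΦ (Pmap x)).hasFDerivAt
    have := hfd.comp_hasDerivAt 0 (hasDerivAt_P_line x e)
    simpa [Function.comp_def, hLo'] using this
  have huniq : fderiv ℝ Lo x e = fderiv ℝ Φ (Pmap x) (DP x e) := h1.unique h2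
  have hg : gradient Lo x a = fderiv ℝ Lo x e := by
    have h3 : (inner ℝ (gradient Lo x) e : ℝ) = fderiv ℝ Lo x e := by
      rw [gradient, InnerProductSpace.toDual_symm_apply]
    rw [← h3, he]
    rw [EuclideanSpace.inner_single_right]
    simp
  rw [hg, huniq]

/-- Partial derivative of `Φ` with respect to the matrix entry `(i, k)`. -/
def Amat (Φ : ((Fin m → Fin d → ℝ) × (Fin m → ℝ)) → ℝ)
    (p : (Fin m → Fin d → ℝ) × (Fin m → ℝ)) (i : Fin m) (k : Fin d) : ℝ :=
  fderiv ℝ Φ p (Pi.single i (Pi.single k 1), 0)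

/-- Partial derivative of `Φ` with respect to the vector entry `i`. -/
def Bvec (Φ : ((Fin m → Fin d → ℝ) × (Fin m → ℝ)) → ℝ)
    (p : (Fin m → Fin d → ℝ) × (Fin m → ℝ)) (i : Fin m) : ℝ :=
  fderiv ℝ Φ p (0, Pi.single i 1)

lemma fderiv_expand (Φ : ((Fin m → Fin d → ℝ) × (Fin m → ℝ)) → ℝ)
    (p z : (Fin m → Fin d → ℝ) × (Fin m → ℝ)) :
    fderiv ℝ Φ p z
      = (∑ i, ∑ k, z.1 i k * Amat Φ p i k) + ∑ i, z.2 i * Bvec Φ p i := by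
  have hz : z = (∑ i, ∑ k, z.1 i k • ((Pi.single i (Pi.single k 1), 0)
        : (Fin m → Fin d → ℝ) × (Fin m → ℝ)))
      + ∑ i, z.2 i • ((0, Pi.single i 1) : (Fin m → Fin d → ℝ) × (Fin m → ℝ)) := by
    apply Prod.ext
    · funext i0 k0
      simp [Prod.fst_sum, Finset.sum_apply, Pi.single_apply]
    · funext i0
      simp [Prod.snd_sum, Finset.sum_apply, Pi.single_apply]
  conv_lhs => rw [hz]
  simp only [map_add, map_sum]
  congr 1
  · refine Finset.sum_congr rfl fun i _ => Finset.sum_congr rfl fun k _ => ?_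
    rw [map_smul, smul_eq_mul, Amat]
  · refine Finset.sum_congr rfl fun i _ => ?_
    rw [map_smul, smul_eq_mul, Bvec]

section
variable (Φ : ((Fin m → Fin d → ℝ) × (Fin m → ℝ)) → ℝ) (hΦ : Differentiable ℝ Φ)
    (Lo : LinParams m J d → ℝ) (hLo' : ∀ θ, Lo θ = Φ (Pmap θ)) (x : LinParams m J d)
include hΦ hLo'

lemma gradU (i0 : Fin m) (j0 : Fin J) :
    gradient Lo x (Sum.inl (i0, j0))
      = (∑ k, x (Sum.inr (Sum.inl (j0, k))) * Amat Φ (Pmap x) i0 k)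
        + x (Sum.inr (Sum.inr (Sum.inr j0))) * Bvec Φ (Pmap x) i0 := by
  rw [grad_eq Φ hΦ Lo hLo', fderiv_expand]
  simp [DP, EuclideanSpace.single_apply, Prod.mk.injEq, Finset.sum_ite_eq,
    Finset.sum_add_distrib, ite_and, mul_ite, Finset.mul_sum]

lemma gradV (j0 : Fin J) (k0 : Fin d) :
    gradient Lo x (Sum.inr (Sum.inl (j0, k0)))
      = ∑ i, x (Sum.inl (i, j0)) * Amat Φ (Pmap x) i k0 := by
  rw [grad_eq Φ hΦ Lo hLo', fderiv_expand]
  simp [DP, EuclideanSpace.single_apply, Prod.mk.injEq, Finset.sum_ite_eq,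
    Finset.sum_add_distrib, ite_and, mul_ite, Finset.mul_sum]

lemma gradv (j0 : Fin J) :
    gradient Lo x (Sum.inr (Sum.inr (Sum.inr j0)))
      = ∑ i, x (Sum.inl (i, j0)) * Bvec Φ (Pmap x) i := by
  rw [grad_eq Φ hΦ Lo hLo', fderiv_expand]
  simp [DP, EuclideanSpace.single_apply, Prod.mk.injEq, Finset.sum_ite_eq,
    Finset.sum_add_distrib, ite_and, mul_ite, Finset.mul_sum]

end

lemma alg (U : Fin m → Fin J → ℝ) (V : Fin J → Fin d → ℝ) (v : Fin J → ℝ)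
    (A : Fin m → Fin d → ℝ) (B : Fin m → ℝ) (j j' : Fin J) :
    (∑ i, ((-((∑ k, V j k * A i k) + v j * B i)) * U i j'
        + U i j * (-((∑ k, V j' k * A i k) + v j' * B i))))
    - (∑ k, ((-(∑ i, U i j * A i k)) * V j' k + V j k * (-(∑ i, U i j' * A i k))))
    - ((-(∑ i, U i j * B i)) * v j' + v j * (-(∑ i, U i j' * B i))) = 0 := by
  simp only [neg_add, neg_mul, mul_neg, add_mul, mul_add, Finset.sum_mul, Finset.mul_sum,
    Finset.sum_add_distrib, Finset.sum_neg_distrib, sub_eq_add_neg, neg_neg]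
  rw [Finset.sum_comm (f := fun i k => V j k * A i k * U i j'),
      Finset.sum_comm (f := fun i k => U i j * (V j' k * A i k))]
  simp only [mul_comm, mul_left_comm, mul_assoc]
  abel

end ConservedAux

open ConservedAux in
/-- for a loss `L(U,V,u,v) = Φ(UV, Uv + u)` depending only on the realized
affine map, along any gradient-flow trajectory the quantity `UᵀU − VVᵀ − vvᵀ` is constant. -/
theorem conserved_quantity_linear_network {m J d : ℕ}
    (Φ : ((Fin m → Fin d → ℝ) × (Fin m → ℝ)) → ℝ) (hΦ : Differentiable ℝ Φ)
    (Lo : LinParams m J d → ℝ)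
    (hLo : ∀ θ : LinParams m J d,
      Lo θ = Φ (fun i k => ∑ j, Umat θ i j * Vmat θ j k,
                fun i => (∑ j, Umat θ i j * vvec θ j) + uvec θ i))
    (θ : ℝ → LinParams m J d)
    (hflow : ∀ t : ℝ, HasDerivAt θ (-(gradient Lo (θ t))) t) :
    ∀ s t : ℝ, ∀ j j' : Fin J,
      (∑ i, Umat (θ s) i j * Umat (θ s) i j')
        - (∑ k, Vmat (θ s) j k * Vmat (θ s) j' k)
        - vvec (θ s) j * vvec (θ s) j'
      = (∑ i, Umat (θ t) i j * Umat (θ t) i j')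
        - (∑ k, Vmat (θ t) j k * Vmat (θ t) j' k)
        - vvec (θ t) j * vvec (θ t) j' := by
  have hLo' : ∀ x : LinParams m J d, Lo x = Φ (Pmap x) := fun x => by
    rw [hLo]; rfl
  -- coordinate-wise gradient flow
  have hc : ∀ (t : ℝ) (a : LinParamIx m J d),
      HasDerivAt (fun t => θ t a) (-(gradient Lo (θ t) a)) t := by
    intro t a
    have := (coordL a).hasFDerivAt.comp_hasDerivAt t (hflow t)
    simpa [Function.comp_def] using this
  intro s t j j'
  set F : ℝ → ℝ := fun t =>
    (∑ i, θ t (Sum.inl (i, j)) * θ t (Sum.inl (i, j')))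
    - (∑ k, θ t (Sum.inr (Sum.inl (j, k))) * θ t (Sum.inr (Sum.inl (j', k))))
    - θ t (Sum.inr (Sum.inr (Sum.inr j))) * θ t (Sum.inr (Sum.inr (Sum.inr j'))) with hFdef
  have hF : ∀ t : ℝ, HasDerivAt F 0 t := by
    intro t
    have HU : HasDerivAt (fun t => ∑ i, θ t (Sum.inl (i, j)) * θ t (Sum.inl (i, j')))
        (∑ i, ((-(gradient Lo (θ t) (Sum.inl (i, j)))) * θ t (Sum.inl (i, j'))
          + θ t (Sum.inl (i, j)) * (-(gradient Lo (θ t) (Sum.inl (i, j')))))) t :=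
      HasDerivAt.fun_sum fun i _ => (hc t _).mul (hc t _)
    have HV : HasDerivAt (fun t => ∑ k, θ t (Sum.inr (Sum.inl (j, k))) * θ t (Sum.inr (Sum.inl (j', k))))
        (∑ k, ((-(gradient Lo (θ t) (Sum.inr (Sum.inl (j, k))))) * θ t (Sum.inr (Sum.inl (j', k)))
          + θ t (Sum.inr (Sum.inl (j, k))) * (-(gradient Lo (θ t) (Sum.inr (Sum.inl (j', k))))))) t :=
      HasDerivAt.fun_sum fun k _ => (hc t _).mul (hc t _)
    have Hv : HasDerivAt (fun t => θ t (Sum.inr (Sum.inr (Sum.inr j))) * θ t (Sum.inr (Sum.inr (Sum.inr j'))))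
        ((-(gradient Lo (θ t) (Sum.inr (Sum.inr (Sum.inr j))))) * θ t (Sum.inr (Sum.inr (Sum.inr j')))
          + θ t (Sum.inr (Sum.inr (Sum.inr j))) * (-(gradient Lo (θ t) (Sum.inr (Sum.inr (Sum.inr j')))))) t :=
      (hc t _).mul (hc t _)
    have H := (HU.sub HV).sub Hv
    have h0 :
        (∑ i, ((-(gradient Lo (θ t) (Sum.inl (i, j)))) * θ t (Sum.inl (i, j'))
          + θ t (Sum.inl (i, j)) * (-(gradient Lo (θ t) (Sum.inl (i, j'))))))
        - (∑ k, ((-(gradient Lo (θ t) (Sum.inr (Sum.inl (j, k))))) * θ t (Sum.inr (Sum.inl (j', k)))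
          + θ t (Sum.inr (Sum.inl (j, k))) * (-(gradient Lo (θ t) (Sum.inr (Sum.inl (j', k)))))))
        - ((-(gradient Lo (θ t) (Sum.inr (Sum.inr (Sum.inr j))))) * θ t (Sum.inr (Sum.inr (Sum.inr j')))
          + θ t (Sum.inr (Sum.inr (Sum.inr j))) * (-(gradient Lo (θ t) (Sum.inr (Sum.inr (Sum.inr j'))))))
        = 0 := by
      simp only [gradU Φ hΦ Lo hLo', gradV Φ hΦ Lo hLo', gradv Φ hΦ Lo hLo']
      exact alg (fun i j0 => θ t (Sum.inl (i, j0))) (fun j0 k => θ t (Sum.inr (Sum.inl (j0, k))))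
        (fun j0 => θ t (Sum.inr (Sum.inr (Sum.inr j0)))) (Amat Φ (Pmap (θ t))) (Bvec Φ (Pmap (θ t))) j j'
    rw [hFdef]
    exact h0 ▸ H
  have hdiff : Differentiable ℝ F := fun x => (hF x).differentiableAt
  have hconst : F s = F t :=
    is_const_of_deriv_eq_zero hdiff (fun x => (hF x).deriv) s t
  simpa [hFdef, Umat, Vmat, vvec] using hconst
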